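/- Scan lower bound via distorted pairs in the star-leaf gadget: let G be a weighted graph containing vertices a_i, a_j joined by an edge of weight w_{ij}, each attached to k leaves: leaves b_i^1, ..., b_i^k attached to a_i and b_j^1, ..., b_j^k attached to a_j, each via an edge of weight w_0 > 0. Assume dist(b_i^p, b_j^q) = w_{ij} + 2·w_0 for all p, q (the shortest path goes through the edge (a_i, a_j)), and suppose h is a sub-additive heuristic (h(x,z) ≤ h(x,y) + h(y,z)) with h(x,y) ≤ dist(x,y) applied to all leaf-to-vertex and vertex-to-vertex distances, satisfying h(a_i, a_j) ≤ w_{ij} − δ for some δ > 4·w_0. Then for every p, q, p' ∈ {1,...,k}: dist(b_i^p, b_i^{p'}) + h(b_i^{p'}, b_j^q) < dist(b_i^p, b_j^q). -/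
import Mathlib


/-- Scan lower bound via distorted pairs in the star-leaf gadget: if the heuristic
underestimates `dist(a_i, a_j)` by `δ > 4·w₀`, then every leaf of `a_i` satisfies the strict
scan inequality with respect to any query from a leaf of `a_i` to a leaf of `a_j`. -/
theorem distorted_pair_scan_bound {V : Type*} (k : ℕ)
    (dist h : V → V → ℝ) (ai aj : V) (bi bj : Fin k → V)
    (w0 wij δ : ℝ) (hw0 : 0 < w0) (hδ : 4 * w0 < δ)
    (hsub : ∀ x y z : V, h x z ≤ h x y + h y z)
    (hadm_leaf_i : ∀ p' : Fin k, h (bi p') ai ≤ w0)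
    (hadm_leaf_j : ∀ q : Fin k, h aj (bj q) ≤ w0)
    (hdistorted : h ai aj ≤ wij - δ)
    (hdist_leaves : ∀ p q : Fin k, dist (bi p) (bj q) = wij + 2 * w0)
    (hdist_same : ∀ p p' : Fin k, dist (bi p) (bi p') ≤ 2 * w0) :
    ∀ p q p' : Fin k,
      dist (bi p) (bi p') + h (bi p') (bj q) < dist (bi p) (bj q) := by
  intro p q p'
  have h1 : h (bi p') (bj q) ≤ h (bi p') ai + h ai (bj q) := hsub _ _ _
  have h2 : h ai (bj q) ≤ h ai aj + h aj (bj q) := hsub _ _ _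
  have := hadm_leaf_i p'
  have := hadm_leaf_j q
  have := hdist_same p p'
  rw [hdist_leaves p q]
  linarith
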